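/- arXiv:2201.10099 — 3 statements merged into one kernel-verified Lean document; each statement's English description precedes it below -/
import Mathlib

section
/- For all t ≥ 0 and all f ∈ C[0,1], μ_t(f) = ∫₀¹ρ(t,u)f(u)du; that is, the solution μ_t of the dual-valued ordinary differential equation has the density ρ(t,·) with respect to Lebesgue measure. -/
open MeasureTheory Set

noncomputable section

/-- The unit interval `[0,1]` as a subset of `ℝ`. -/
abbrev I01 : Set ℝ := Set.Icc 0 1

/-- The adjoint `P₁*` of a bounded operator `P₁` on `C[0,1]`, acting on the dual space,
`(P₁*ν)(f) = ν(P₁ f)`. -/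
noncomputable def dualAdj (P1 : C(I01, ℝ) →L[ℝ] C(I01, ℝ)) :
    (C(I01, ℝ) →L[ℝ] ℝ) →L[ℝ] (C(I01, ℝ) →L[ℝ] ℝ) :=
  (ContinuousLinearMap.compL ℝ C(I01, ℝ) C(I01, ℝ) ℝ).flip P1


/-! ### Auxiliary lemmas -/

lemma myInt (g : C(I01, ℝ)) : MeasureTheory.Integrable (fun u => g u) volume :=
  g.continuous.integrable_of_hasCompactSupport (HasCompactSupport.of_compactSpace _)

lemma myInt2 (F : C(I01 × I01, ℝ)) :
    MeasureTheory.Integrable (fun p : I01 × I01 => F p) (volume.prod volume) :=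
  F.continuous.integrable_of_hasCompactSupport (HasCompactSupport.of_compactSpace _)

lemma myIntMarg (F : C(I01 × I01, ℝ)) :
    MeasureTheory.Integrable (fun u : I01 => ∫ v : I01, F (u, v)) volume :=
  (myInt2 F).integral_prod_left

lemma myIntMarg' (F : C(I01 × I01, ℝ)) :
    MeasureTheory.Integrable (fun u : I01 => ∫ v : I01, F (v, u)) volume := by
  simpa using myIntMarg (F.comp ⟨Prod.swap, continuous_swap⟩)

lemma mySwap (F : C(I01 × I01, ℝ)) :
    (∫ u : I01, ∫ v : I01, F (v, u)) = ∫ u : I01, ∫ v : I01, F (u, v) := by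
  have hi : MeasureTheory.Integrable (Function.uncurry fun x y : I01 => F (y, x))
      (volume.prod volume) := myInt2 (F.comp ⟨Prod.swap, continuous_swap⟩)
  exact integral_integral_swap hi

/-- The `L²`-type pairing `⟨g, f⟩ = ∫ g·f` as a continuous bilinear map. -/
noncomputable def pairL : C(I01, ℝ) →L[ℝ] C(I01, ℝ) →L[ℝ] ℝ :=
  LinearMap.mkContinuous₂
    (LinearMap.mk₂ ℝ (fun g f => ∫ u : I01, g u * f u)
      (fun g1 g2 f => by
        have := integral_add (myInt (g1 * f)) (myInt (g2 * f))
        simpa [ContinuousMap.mul_apply, add_mul] using this)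
      (fun c g f => by
        simp only [ContinuousMap.coe_smul, Pi.smul_apply, smul_eq_mul, mul_assoc]
        exact MeasureTheory.integral_const_mul c _)
      (fun g f1 f2 => by
        have := integral_add (myInt (g * f1)) (myInt (g * f2))
        simpa [ContinuousMap.mul_apply, mul_add] using this)
      (fun c g f => by
        simp only [ContinuousMap.coe_smul, Pi.smul_apply, smul_eq_mul]
        rw [← MeasureTheory.integral_const_mul]
        congr 1; funext u; ring))
    ((volume (univ : Set I01)).toReal)
    (fun g f => by
      have h := norm_integral_le_of_norm_le_const (C := ‖g‖ * ‖f‖) (μ := volume)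
        (f := fun u : I01 => g u * f u) ?_
      · calc ‖(LinearMap.mk₂ ℝ (fun g f : C(I01, ℝ) => ∫ u : I01, g u * f u)
            _ _ _ _) g f‖ = ‖∫ u : I01, g u * f u‖ := rfl
          _ ≤ ‖g‖ * ‖f‖ * (volume (univ : Set I01)).toReal := h
          _ = (volume (univ : Set I01)).toReal * ‖g‖ * ‖f‖ := by ring
      · filter_upwards with u
        calc ‖g u * f u‖ = ‖g u‖ * ‖f u‖ := norm_mul _ _
          _ ≤ ‖g‖ * ‖f‖ := mul_le_mul (g.norm_coe_le_norm u) (f.norm_coe_le_norm u)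
              (norm_nonneg _) (norm_nonneg _))

lemma pairL_apply (g f : C(I01, ℝ)) : pairL g f = ∫ u : I01, g u * f u := rfl

/-- Kernel-type continuous function on the square. -/
noncomputable def kerM (K : C(I01 × I01, ℝ)) (f g : C(I01, ℝ)) : C(I01 × I01, ℝ) :=
  ⟨fun p => f p.1 * (K p * g p.2),
    ((f.continuous.comp continuous_fst).mul
      (K.continuous.mul (g.continuous.comp continuous_snd)))⟩

lemma kerM_apply (K : C(I01 × I01, ℝ)) (f g : C(I01, ℝ)) (p : I01 × I01) :
    kerM K f g p = f p.1 * (K p * g p.2) := rfl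

/-- for all `t ≥ 0` and `f ∈ C[0,1]`, `μ_t(f) = ∫₀¹ ρ(t,u) f(u) du`;
the solution `μ_t` of the dual-valued ODE has density `ρ(t,·)`. -/
theorem stmt3
    (b c : C(I01, ℝ)) (lam a1 a2 a3 a4 : C(I01 × I01, ℝ))
    (hb : ∀ u, 0 ≤ b u) (hc : ∀ u, 0 ≤ c u)
    (hlam : ∀ p, 0 ≤ lam p) (ha1 : ∀ p, 0 ≤ a1 p) (ha2 : ∀ p, 0 ≤ a2 p)
    (ha3 : ∀ p, 0 ≤ a3 p) (ha4 : ∀ p, 0 ≤ a4 p)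
    (φ : C(I01, ℝ))
    (P1 : C(I01, ℝ) →L[ℝ] C(I01, ℝ))
    (hP1 : ∀ (f : C(I01, ℝ)) (u : I01),
      P1 f u = b u * (c u - 1) * f u
        + f u * (∫ v : I01, lam (u, v) * (a1 (u, v) - 1))
        + (∫ v : I01, lam (u, v) * a3 (u, v) * f v)
        + f u * (∫ v : I01, lam (v, u) * (a4 (v, u) - 1))
        + (∫ v : I01, lam (v, u) * f v * a2 (v, u)))
    (P8 : C(I01, ℝ) →L[ℝ] C(I01, ℝ))
    (hP8 : ∀ (f : C(I01, ℝ)) (u : I01),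
      P8 f u = b u * (c u - 1) * f u
        + f u * (∫ v : I01, lam (v, u) * (a4 (v, u) - 1))
        + f u * (∫ v : I01, lam (u, v) * (a1 (u, v) - 1))
        + (∫ v : I01, lam (u, v) * a2 (u, v) * f v)
        + (∫ v : I01, lam (v, u) * a3 (v, u) * f v))
    (μ0 : C(I01, ℝ) →L[ℝ] ℝ) (hμ0 : ∀ f : C(I01, ℝ), μ0 f = ∫ u : I01, φ u * f u)
    (μ : ℝ → (C(I01, ℝ) →L[ℝ] ℝ)) (hμinit : μ 0 = μ0)
    (hμ : ∀ t ∈ Set.Ici (0 : ℝ), HasDerivWithinAt μ (dualAdj P1 (μ t)) (Set.Ici 0) t)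
    (ρ : ℝ → C(I01, ℝ)) (hρinit : ρ 0 = φ)
    (hρ : ∀ t ∈ Set.Ici (0 : ℝ), HasDerivWithinAt ρ (P8 (ρ t)) (Set.Ici 0) t) :
    ∀ t ∈ Set.Ici (0 : ℝ), ∀ f : C(I01, ℝ),
      μ t f = ∫ u : I01, ρ t u * f u := by
  -- the key adjoint identity: `⟨P8 g, f⟩ = ⟨g, P1 f⟩`
  have key : ∀ g f : C(I01, ℝ), pairL (P8 g) f = pairL g (P1 f) := by
    intro g f
    have h2a : ∀ u : I01, f u * (∫ v : I01, lam (u, v) * a2 (u, v) * g v)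
        = ∫ v : I01, kerM (lam * a2) f g (u, v) := by
      intro u
      rw [← MeasureTheory.integral_const_mul]
      first
      | rfl
      | (congr 1; funext v; simp only [kerM_apply, ContinuousMap.mul_apply]; ring)
    have h2b : ∀ u : I01, g u * (∫ v : I01, lam (v, u) * f v * a2 (v, u))
        = ∫ v : I01, kerM (lam * a2) f g (v, u) := by
      intro u
      rw [← MeasureTheory.integral_const_mul]
      first
      | rfl
      | (congr 1; funext v; simp only [kerM_apply, ContinuousMap.mul_apply]; ring)
    have h3a : ∀ u : I01, f u * (∫ v : I01, lam (v, u) * a3 (v, u) * g v)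
        = ∫ v : I01, kerM (lam * a3) g f (v, u) := by
      intro u
      rw [← MeasureTheory.integral_const_mul]
      first
      | rfl
      | (congr 1; funext v; simp only [kerM_apply, ContinuousMap.mul_apply]; ring)
    have h3b : ∀ u : I01, g u * (∫ v : I01, lam (u, v) * a3 (u, v) * f v)
        = ∫ v : I01, kerM (lam * a3) g f (u, v) := by
      intro u
      rw [← MeasureTheory.integral_const_mul]
      first
      | rfl
      | (congr 1; funext v; simp only [kerM_apply, ContinuousMap.mul_apply]; ring)
    have hpt : (fun u : I01 => (P8 g) u * f u)
        = fun u : I01 => g u * (P1 f) u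
          + ((∫ v : I01, kerM (lam * a2) f g (u, v))
            - ∫ v : I01, kerM (lam * a2) f g (v, u))
          + ((∫ v : I01, kerM (lam * a3) g f (v, u))
            - ∫ v : I01, kerM (lam * a3) g f (u, v)) := by
      funext u
      rw [hP8, hP1, ← h2a, ← h2b, ← h3a, ← h3b]
      ring
    have i1 : MeasureTheory.Integrable (fun u : I01 => g u * (P1 f) u) volume := by
      simpa [ContinuousMap.mul_apply] using myInt (g * P1 f)
    have i2 := myIntMarg (kerM (lam * a2) f g)
    have i3 := myIntMarg' (kerM (lam * a2) f g)
    have i4 := myIntMarg' (kerM (lam * a3) g f)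
    have i5 := myIntMarg (kerM (lam * a3) g f)
    have i23 : MeasureTheory.Integrable (fun u : I01 =>
        (∫ v : I01, kerM (lam * a2) f g (u, v)) - ∫ v : I01, kerM (lam * a2) f g (v, u))
        volume := by exact i2.sub i3
    have i45 : MeasureTheory.Integrable (fun u : I01 =>
        (∫ v : I01, kerM (lam * a3) g f (v, u)) - ∫ v : I01, kerM (lam * a3) g f (u, v))
        volume := by exact i4.sub i5
    have i123 : MeasureTheory.Integrable (fun u : I01 => g u * (P1 f) u
        + ((∫ v : I01, kerM (lam * a2) f g (u, v)) - ∫ v : I01, kerM (lam * a2) f g (v, u)))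
        volume := by exact i1.add i23
    rw [pairL_apply, pairL_apply, hpt,
      integral_add i123 i45, integral_add i1 i23,
      integral_sub i2 i3, integral_sub i4 i5,
      mySwap (kerM (lam * a2) f g), mySwap (kerM (lam * a3) g f)]
    ring
  have hAdj : ∀ g : C(I01, ℝ), dualAdj P1 (pairL g) = pairL (P8 g) := by
    intro g
    ext f
    have h1 : dualAdj P1 (pairL g) f = pairL g (P1 f) := rfl
    rw [h1, ← key g f]
  -- `ν t := ⟨ρ t, ·⟩` solves the same ODE as `μ`
  have hν' : ∀ t ∈ Set.Ici (0 : ℝ),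
      HasDerivWithinAt (fun s => pairL (ρ s)) (dualAdj P1 (pairL (ρ t))) (Set.Ici 0) t := by
    intro t ht
    have hF : HasFDerivAt (⇑pairL) pairL (ρ t) := by apply ContinuousLinearMap.hasFDerivAt
    have h := HasFDerivAt.comp_hasDerivWithinAt (l := ⇑pairL) (l' := pairL) t hF (hρ t ht)
    rw [hAdj (ρ t)]
    exact h
  have hinit : μ 0 = pairL (ρ 0) := by
    ext f
    rw [hμinit, hμ0]
    simp only [hρinit, pairL_apply]
  intro t ht f
  -- uniqueness of solutions on `[0, t]`
  have hlip : ∀ s : ℝ, LipschitzWith ‖P1‖₊ (fun x : C(I01, ℝ) →L[ℝ] ℝ => dualAdj P1 x) := by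
    intro s
    apply LipschitzWith.of_dist_le_mul
    intro x y
    calc dist (dualAdj P1 x) (dualAdj P1 y) = ‖(x - y).comp P1‖ := by have h := dist_eq_norm (dualAdj P1 x) (dualAdj P1 y); rw [h, ← map_sub]; rfl
      _ ≤ ‖x - y‖ * ‖P1‖ := ContinuousLinearMap.opNorm_comp_le _ _
      _ = ‖P1‖ * dist x y := by have h := dist_eq_norm x y; rw [h]; ring
  have huniq : Set.EqOn μ (fun s => pairL (ρ s)) (Set.Icc 0 t) := by
    apply ODE_solution_unique (v := fun _ x => dualAdj P1 x) (K := ‖P1‖₊)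
      (fun s => hlip s)
    · intro s hs
      exact ((hμ s hs.1).continuousWithinAt).mono Set.Icc_subset_Ici_self
    · intro s hs
      exact (hμ s hs.1).mono (Set.Ici_subset_Ici.2 hs.1)
    · intro s hs
      exact ((hν' s hs.1).continuousWithinAt).mono Set.Icc_subset_Ici_self
    · intro s hs
      exact (hν' s hs.1).mono (Set.Ici_subset_Ici.2 hs.1)
    · exact hinit
  have := huniq ⟨ht, le_refl t⟩
  rw [this]
  exact pairL_apply (ρ t) f
end
end

section
/- Let T > 0. There exists a unique continuously differentiable map t ↦ ϑ(t,·) from [0,T] to C[0,1] (derivative taken in the supremum norm) such that ϑ(0,·) = φ and (d/dt)ϑ(t,·) = P₉ϑ(t,·) + l̂_{1,t} for all t ∈ [0,T]. Moreover, ϑ is jointly continuous on [0,T]×[0,1], and the unique solution θ of the dual-valued equation (d/dt)θ_t = P₂*θ_t + l_{1,t} with θ₀(f) = ∫₀¹φ(u)f(u)du satisfies θ_t(f) = ∫₀¹ϑ(t,u)f(u)du for all t ∈ [0,T] and f ∈ C[0,1]. -/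
open MeasureTheory Set

noncomputable section

set_option synthInstance.maxHeartbeats 1000000
set_option maxHeartbeats 4000000

/-! ### Auxiliary lemmas -/

lemma intgI {f : I01 → ℝ} (hf : Continuous f) : Integrable f :=
  hf.integrable_of_hasCompactSupport (HasCompactSupport.of_compactSpace _)

lemma intgI2 {f : I01 × I01 → ℝ} (hf : Continuous f) :
    Integrable f ((volume : Measure I01).prod volume) :=
  hf.integrable_of_hasCompactSupport (HasCompactSupport.of_compactSpace _)

lemma absIntLe {k : I01 → ℝ} {C : ℝ} (h : ∀ v, ‖k v‖ ≤ C) : ‖∫ v : I01, k v‖ ≤ C := by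
  have := norm_integral_le_of_norm_le_const (μ := (volume : Measure I01))
    (f := k) (C := C) (Filter.Eventually.of_forall h)
  simpa using this

lemma contParam {k : I01 × I01 → ℝ} (hk : Continuous k) :
    Continuous fun u : I01 => ∫ v : I01, k (u, v) := by
  obtain ⟨C, hC⟩ : ∃ C, ∀ p, ‖k p‖ ≤ C := by
    obtain ⟨C, hC⟩ := isCompact_univ.exists_bound_of_continuousOn hk.continuousOn
    exact ⟨C, fun p => hC p trivial⟩
  refine continuous_of_dominated (fun u => ?_) (fun u => ?_) (integrable_const C) ?_
  · exact (hk.comp (Continuous.prodMk_right u)).aestronglyMeasurable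
  · exact Filter.Eventually.of_forall fun v => hC _
  · exact Filter.Eventually.of_forall fun v => hk.comp (continuous_id.prodMk continuous_const)

lemma swapInt {k : I01 × I01 → ℝ} (hk : Continuous k) :
    ∫ u : I01, ∫ v : I01, k (u, v) = ∫ v : I01, ∫ u : I01, k (u, v) :=
  integral_integral_swap (intgI2 hk)

lemma pairSwap (k : C(I01 × I01, ℝ)) (g f : C(I01, ℝ)) :
    ∫ u : I01, (∫ v : I01, k (u, v) * g v) * f u
      = ∫ u : I01, g u * ∫ v : I01, k (v, u) * f v := by
  have hc : Continuous fun p : I01 × I01 => k (p.1, p.2) * g p.2 * f p.1 := by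
    have := k.continuous
    fun_prop
  calc ∫ u : I01, (∫ v : I01, k (u, v) * g v) * f u
      = ∫ u : I01, ∫ v : I01, k (u, v) * g v * f u := by
        refine integral_congr_ae (Filter.Eventually.of_forall fun u => ?_)
        exact (integral_mul_const _ _).symm
    _ = ∫ v : I01, ∫ u : I01, k (u, v) * g v * f u := swapInt hc
    _ = ∫ v : I01, g v * ∫ u : I01, k (u, v) * f u := by
        refine integral_congr_ae (Filter.Eventually.of_forall fun v => ?_)
        show ∫ u : I01, k (u, v) * g v * f u = g v * ∫ u : I01, k (u, v) * f u
        rw [← integral_const_mul]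
        refine integral_congr_ae (Filter.Eventually.of_forall fun u => ?_)
        ring

lemma pairSwap' (k : C(I01 × I01, ℝ)) (g f : C(I01, ℝ)) :
    ∫ u : I01, (∫ v : I01, k (v, u) * g v) * f u
      = ∫ u : I01, g u * ∫ v : I01, k (u, v) * f v :=
  pairSwap (k.comp ⟨Prod.swap, continuous_swap⟩) g f

lemma int5 {a1 a2 a3 a4 a5 : I01 → ℝ} (h1 : Continuous a1) (h2 : Continuous a2)
    (h3 : Continuous a3) (h4 : Continuous a4) (h5 : Continuous a5) :
    ∫ u : I01, (a1 u + a2 u + a3 u + a4 u + a5 u)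
      = (∫ u : I01, a1 u) + (∫ u : I01, a2 u) + (∫ u : I01, a3 u)
        + (∫ u : I01, a4 u) + (∫ u : I01, a5 u) := by
  rw [integral_add (by exact ((((intgI h1).add (intgI h2)).add (intgI h3)).add (intgI h4)))
    (intgI h5),
    integral_add (by exact (((intgI h1).add (intgI h2)).add (intgI h3))) (intgI h4),
    integral_add (by exact ((intgI h1).add (intgI h2))) (intgI h3),
    integral_add (intgI h1) (intgI h2)]

/-- Uniqueness for the linear inhomogeneous ODE `x' = A x + g t` on `[0, T]`. -/
lemma odeUniq {E : Type} [NormedAddCommGroup E] [NormedSpace ℝ E]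
    (A : E →L[ℝ] E) (g : ℝ → E) {T : ℝ} (f1 f2 : ℝ → E)
    (h1 : ∀ t ∈ Set.Icc (0:ℝ) T, HasDerivWithinAt f1 (A (f1 t) + g t) (Set.Icc 0 T) t)
    (h2 : ∀ t ∈ Set.Icc (0:ℝ) T, HasDerivWithinAt f2 (A (f2 t) + g t) (Set.Icc 0 T) t)
    (h0 : f1 0 = f2 0) : EqOn f1 f2 (Set.Icc 0 T) := by
  have key : ∀ (f : ℝ → E), (∀ t ∈ Set.Icc (0:ℝ) T,
      HasDerivWithinAt f (A (f t) + g t) (Set.Icc 0 T) t) →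
      ∀ t ∈ Set.Ico (0:ℝ) T, HasDerivWithinAt f (A (f t) + g t) (Set.Ici t) t := by
    intro f hf t ht
    refine (hf t ⟨ht.1, ht.2.le⟩).mono_of_mem_nhdsWithin ?_
    have : Set.Ici t ∩ Set.Iio T ⊆ Set.Icc 0 T := fun s hs => ⟨le_trans ht.1 hs.1, hs.2.le⟩
    exact Filter.mem_of_superset (inter_mem_nhdsWithin _ (Iio_mem_nhds ht.2)) this
  have lip : ∀ t, LipschitzWith ‖A‖₊ (fun x => A x + g t) := fun t =>
    LipschitzWith.of_dist_le_mul fun x y => by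
      simpa [dist_add_right] using A.lipschitz.dist_le_mul x y
  exact ODE_solution_unique (v := fun t x => A x + g t) lip
    (fun t ht => (h1 t ht).continuousWithinAt) (key f1 h1)
    (fun t ht => (h2 t ht).continuousWithinAt) (key f2 h2) h0

/-- Existence for the linear inhomogeneous ODE `x' = A x + L t` with continuous `L`. -/
lemma odeExist {E : Type} [NormedAddCommGroup E] [NormedSpace ℝ E] [CompleteSpace E]
    (A : E →L[ℝ] E) (L : ℝ → E) (hL : Continuous L) (φ : E) :
    ∃ ϑ : ℝ → E, Continuous ϑ ∧ ϑ 0 = φ ∧ ∀ t : ℝ, HasDerivAt ϑ (A (ϑ t) + L t) t := by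
  set Ex : ℝ → (E →L[ℝ] E) := fun t => NormedSpace.exp (t • A) with hEx
  have ExCont : Continuous Ex :=
    continuous_iff_continuousAt.2 fun t => (hasDerivAt_exp_smul_const A t).continuousAt
  set g : ℝ → E := fun s => Ex (-s) (L s) with hgdef
  have hg : Continuous g := (ExCont.comp continuous_neg).clm_apply hL
  set ψ : ℝ → E := fun t => φ + ∫ s in (0:ℝ)..t, g s with hψdef
  have hψ : ∀ t, HasDerivAt ψ (g t) t := fun t =>
    (intervalIntegral.integral_hasDerivAt_right (hg.intervalIntegrable 0 t)
      (hg.stronglyMeasurableAtFilter _ _) hg.continuousAt).const_add φ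
  refine ⟨fun t => Ex t (ψ t), ?_, ?_, ?_⟩
  · exact ExCont.clm_apply (continuous_iff_continuousAt.2 fun t => (hψ t).continuousAt)
  · simp [hEx, hψdef, NormedSpace.exp_zero]
  · intro t
    have hd : HasDerivAt (fun t => Ex t (ψ t)) ((Ex t * A) (ψ t) + Ex t (g t)) t :=
      HasDerivAt.clm_apply (hasDerivAt_exp_smul_const A t) (hψ t)
    have comm : Commute A (Ex t) := ((Commute.refl A).smul_right t).exp_right
    have e1 : (Ex t * A) (ψ t) = A (Ex t (ψ t)) := by
      rw [← comm.eq]; rfl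
    have e2 : Ex t (g t) = L t := by
      have h1 : Ex t * Ex (-t) = 1 := by
        rw [hEx]
        rw [← NormedSpace.exp_add_of_commute_of_mem_ball (𝕂 := ℝ) (((Commute.refl A).smul_right (-t)).smul_left t)
          ((NormedSpace.expSeries_radius_eq_top ℝ (E →L[ℝ] E)).symm ▸ edist_lt_top _ _)
          ((NormedSpace.expSeries_radius_eq_top ℝ (E →L[ℝ] E)).symm ▸ edist_lt_top _ _)]
        simp [← add_smul, NormedSpace.exp_zero]
      calc Ex t (Ex (-t) (L t)) = (Ex t * Ex (-t)) (L t) := rfl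
        _ = L t := by rw [h1]; rfl
    rw [e1, e2] at hd
    exact hd

/-- The pairing `g ↦ (f ↦ ∫ g f)` as a continuous linear map. -/
def Jmap : C(I01, ℝ) →L[ℝ] (C(I01, ℝ) →L[ℝ] ℝ) :=
  LinearMap.mkContinuous₂
    (LinearMap.mk₂ ℝ (fun g f => ∫ u : I01, g u * f u)
      (fun g1 g2 f => by
        simp only [ContinuousMap.add_apply, add_mul]
        exact integral_add (intgI (g1.continuous.mul f.continuous))
          (intgI (g2.continuous.mul f.continuous)))
      (fun c g f => by
        simp only [ContinuousMap.smul_apply, smul_eq_mul, mul_assoc]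
        exact integral_const_mul c _)
      (fun g f1 f2 => by
        simp only [ContinuousMap.add_apply, mul_add]
        exact integral_add (intgI (g.continuous.mul f1.continuous))
          (intgI (g.continuous.mul f2.continuous)))
      (fun c g f => by
        simp only [ContinuousMap.smul_apply, smul_eq_mul]
        rw [← integral_const_mul]
        congr 1; ext u; ring))
    1
    (fun g f => by
      simp only [LinearMap.mk₂_apply, one_mul]
      refine absIntLe fun v => ?_
      rw [norm_mul]
      exact mul_le_mul (g.norm_coe_le_norm v) (f.norm_coe_le_norm v)
        (norm_nonneg _) (norm_nonneg _))

@[simp] lemma Jmap_apply (g f : C(I01, ℝ)) : Jmap g f = ∫ u : I01, g u * f u := rfl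

/-- The integral operator with kernel `k`, as a continuous linear map on `C(I01, ℝ)`. -/
def intOp (k : C(I01 × I01, ℝ)) : C(I01, ℝ) →L[ℝ] C(I01, ℝ) :=
  LinearMap.mkContinuous
    { toFun := fun g => ⟨fun u => ∫ v : I01, k (u, v) * g v,
        contParam (k := fun p => k p * g p.2) (by have := k.continuous; fun_prop)⟩
      map_add' := fun g1 g2 => by
        ext u
        simp only [ContinuousMap.coe_mk, ContinuousMap.add_apply, mul_add]
        exact integral_add (intgI (by have := k.continuous; fun_prop))
          (intgI (by have := k.continuous; fun_prop))
      map_smul' := fun r g => by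
        ext u
        simp only [ContinuousMap.coe_mk, ContinuousMap.smul_apply, smul_eq_mul,
          RingHom.id_apply]
        rw [← integral_const_mul]
        congr 1; ext v; ring }
    ‖k‖
    (fun g => by
      refine (ContinuousMap.norm_le _ (by positivity)).2 fun u => ?_
      refine absIntLe fun v => ?_
      rw [norm_mul]
      exact mul_le_mul (k.norm_coe_le_norm (u, v)) (g.norm_coe_le_norm v)
        (norm_nonneg _) (norm_nonneg _))

/-- Precomposition with `P` on the dual space, as a linear map. -/
def compOpAux (P : C(I01, ℝ) →L[ℝ] C(I01, ℝ)) :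
    (C(I01, ℝ) →L[ℝ] ℝ) →ₗ[ℝ] (C(I01, ℝ) →L[ℝ] ℝ) where
  toFun x := x.comp P
  map_add' x y := by ext f; simp
  map_smul' r x := by ext f; simp

/-- Precomposition with `P` on the dual space, as a continuous linear map. -/
def compOp (P : C(I01, ℝ) →L[ℝ] C(I01, ℝ)) :
    (C(I01, ℝ) →L[ℝ] ℝ) →L[ℝ] (C(I01, ℝ) →L[ℝ] ℝ) :=
  LinearMap.mkContinuous (𝕜 := ℝ) (𝕜₂ := ℝ) (E := C(I01, ℝ) →L[ℝ] ℝ)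
    (F := C(I01, ℝ) →L[ℝ] ℝ) (σ := RingHom.id ℝ) (f := compOpAux P) ‖P‖
    (fun x => by
      have hbnd : ∀ f : C(I01, ℝ), ‖x (P f)‖ ≤ ‖P‖ * ‖x‖ * ‖f‖ := fun f =>
        calc ‖x (P f)‖ ≤ ‖x‖ * ‖P f‖ := x.le_opNorm _
          _ ≤ ‖x‖ * (‖P‖ * ‖f‖) :=
              mul_le_mul_of_nonneg_left (P.le_opNorm f) (ContinuousLinearMap.opNorm_nonneg x)
          _ = ‖P‖ * ‖x‖ * ‖f‖ := by ring
      exact ContinuousLinearMap.opNorm_le_bound _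
        (mul_nonneg (ContinuousLinearMap.opNorm_nonneg P)
          (ContinuousLinearMap.opNorm_nonneg x)) hbnd)

@[simp] lemma compOp_apply (P : C(I01, ℝ) →L[ℝ] C(I01, ℝ)) (x : C(I01, ℝ) →L[ℝ] ℝ) :
    compOp P x = x.comp P := by
  simp [compOp, compOpAux, LinearMap.mkContinuous_apply]

lemma JmapDeriv {g : ℝ → C(I01, ℝ)} {d : C(I01, ℝ)} {s : Set ℝ} {t : ℝ}
    (h : HasDerivWithinAt g d s t) :
    HasDerivWithinAt (fun x => Jmap (g x)) (Jmap d) s t := by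
  have hJ : HasFDerivAt (𝕜 := ℝ) (⇑Jmap : C(I01, ℝ) → (C(I01, ℝ) →L[ℝ] ℝ)) Jmap (g t) :=
    Jmap.hasFDerivAt
  exact HasFDerivAt.comp_hasDerivWithinAt (l := ⇑Jmap) (l' := Jmap) t (by exact hJ) h

@[simp] lemma intOp_apply (k : C(I01 × I01, ℝ)) (g : C(I01, ℝ)) (u : I01) :
    intOp k g u = ∫ v : I01, k (u, v) * g v := by
  simp [intOp, LinearMap.mkContinuous_apply]

attribute [irreducible] Jmap intOp compOp

/-- existence and uniqueness of the `C[0,1]`-valued solution `ϑ` of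
`dϑ(t,·)/dt = P₉ϑ(t,·) + l̂_{1,t}`, `ϑ(0,·) = φ`; moreover `ϑ` is jointly continuous and
the solution `θ` of the dual-valued equation satisfies `θ_t(f) = ∫₀¹ ϑ(t,u) f(u) du`. -/
theorem stmt8
    (b c : C(I01, ℝ)) (lam a1 a2 a3 a4 : C(I01 × I01, ℝ))
    (hb : ∀ u, 0 ≤ b u) (hc : ∀ u, 0 ≤ c u)
    (hlam : ∀ p, 0 ≤ lam p) (ha1 : ∀ p, 0 ≤ a1 p) (ha2 : ∀ p, 0 ≤ a2 p)
    (ha3 : ∀ p, 0 ≤ a3 p) (ha4 : ∀ p, 0 ≤ a4 p)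
    (φ : C(I01, ℝ)) (T : ℝ) (hT : 0 < T)
    (P8 : C(I01, ℝ) →L[ℝ] C(I01, ℝ))
    (hP8 : ∀ (f : C(I01, ℝ)) (u : I01),
      P8 f u = b u * (c u - 1) * f u
        + f u * (∫ v : I01, lam (v, u) * (a4 (v, u) - 1))
        + f u * (∫ v : I01, lam (u, v) * (a1 (u, v) - 1))
        + (∫ v : I01, lam (u, v) * a2 (u, v) * f v)
        + (∫ v : I01, lam (v, u) * a3 (v, u) * f v))
    (ρ : ℝ → C(I01, ℝ)) (hρinit : ρ 0 = φ)
    (hρ : ∀ t ∈ Set.Ici (0 : ℝ), HasDerivWithinAt ρ (P8 (ρ t)) (Set.Ici 0) t)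
    (P2 : C(I01, ℝ) →L[ℝ] C(I01, ℝ))
    (hP2 : ∀ (f : C(I01, ℝ)) (u : I01),
      P2 f u = (c u ^ 2 - 1) * b u * f u
        + f u * (∫ v : I01, lam (u, v) * (a1 (u, v) ^ 2 - 1))
        + (∫ v : I01, lam (v, u) * a2 (v, u) ^ 2 * f v)
        + (∫ v : I01, lam (u, v) * a3 (u, v) ^ 2 * f v)
        + f u * (∫ v : I01, lam (v, u) * (a4 (v, u) ^ 2 - 1)))
    (l1 : ℝ → (C(I01, ℝ) →L[ℝ] ℝ))
    (hl1 : ∀ (t : ℝ) (f : C(I01, ℝ)),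
      l1 t f = 2 * (∫ u : I01, ∫ v : I01,
          ρ t u * ρ t v * a1 (u, v) * a2 (u, v) * lam (u, v) * f u)
        + 2 * ∫ u : I01, ∫ v : I01,
            lam (v, u) * a3 (v, u) * a4 (v, u) * ρ t u * ρ t v * f u)
    (P9 : C(I01, ℝ) →L[ℝ] C(I01, ℝ))
    (hP9 : ∀ (f : C(I01, ℝ)) (u : I01),
      P9 f u = (c u ^ 2 - 1) * b u * f u
        + f u * (∫ v : I01, lam (u, v) * (a1 (u, v) ^ 2 - 1))
        + (∫ v : I01, lam (u, v) * a2 (u, v) ^ 2 * f v)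
        + (∫ v : I01, lam (v, u) * a3 (v, u) ^ 2 * f v)
        + f u * (∫ v : I01, lam (v, u) * (a4 (v, u) ^ 2 - 1)))
    (lhat1 : ℝ → C(I01, ℝ))
    (hlhat1 : ∀ (t : ℝ) (u : I01),
      lhat1 t u = 2 * (∫ v : I01, ρ t u * ρ t v * a1 (u, v) * a2 (u, v) * lam (u, v))
        + 2 * ∫ v : I01, lam (v, u) * a3 (v, u) * a4 (v, u) * ρ t u * ρ t v)
    (θ0 : C(I01, ℝ) →L[ℝ] ℝ) (hθ0 : ∀ f : C(I01, ℝ), θ0 f = ∫ u : I01, φ u * f u)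
    (θ : ℝ → (C(I01, ℝ) →L[ℝ] ℝ)) (hθinit : θ 0 = θ0)
    (hθ : ∀ t ∈ Set.Icc (0 : ℝ) T,
      HasDerivWithinAt θ ((θ t).comp P2 + l1 t) (Set.Icc 0 T) t) :
    ∃ ϑ : ℝ → C(I01, ℝ),
      (ϑ 0 = φ ∧
        ∀ t ∈ Set.Icc (0 : ℝ) T,
          HasDerivWithinAt ϑ (P9 (ϑ t) + lhat1 t) (Set.Icc 0 T) t) ∧
      (∀ ϑ' : ℝ → C(I01, ℝ),
        (ϑ' 0 = φ ∧
          ∀ t ∈ Set.Icc (0 : ℝ) T,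
            HasDerivWithinAt ϑ' (P9 (ϑ' t) + lhat1 t) (Set.Icc 0 T) t) →
        ∀ t ∈ Set.Icc (0 : ℝ) T, ϑ' t = ϑ t) ∧
      ContinuousOn (fun p : ℝ × I01 => ϑ p.1 p.2) (Set.Icc 0 T ×ˢ Set.univ) ∧
      ∀ t ∈ Set.Icc (0 : ℝ) T, ∀ f : C(I01, ℝ),
        θ t f = ∫ u : I01, ϑ t u * f u := by
  classical
  have hca1 := a1.continuous
  have hca2 := a2.continuous
  have hca3 := a3.continuous
  have hca4 := a4.continuous
  have hclam := lam.continuous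
  -- continuity of ρ on [0, T]
  have hρc : ContinuousOn ρ (Set.Icc 0 T) := fun t ht =>
    ((hρ t ht.1).continuousWithinAt).mono (fun s hs => hs.1)
  -- the kernel expressing lhat1
  set k0 : C(I01 × I01, ℝ) :=
    ⟨fun p => 2 * (a1 p * a2 p * lam p)
        + 2 * (lam (p.2, p.1) * a3 (p.2, p.1) * a4 (p.2, p.1)), by fun_prop⟩ with hk0
  -- lhat1 as a continuous expression in ρ
  have hlh_eq : ∀ t, lhat1 t = ρ t * (intOp k0) (ρ t) := by
    intro t
    ext u
    rw [hlhat1 t u, ContinuousMap.mul_apply, intOp_apply]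
    have hint : ∀ v : I01, k0 (u, v) * ρ t v
        = 2 * (a1 (u, v) * a2 (u, v) * lam (u, v)) * ρ t v
          + 2 * (lam (v, u) * a3 (v, u) * a4 (v, u)) * ρ t v := fun v => by
      show (2 * (a1 (u, v) * a2 (u, v) * lam (u, v))
          + 2 * (lam (v, u) * a3 (v, u) * a4 (v, u))) * ρ t v = _
      ring
    rw [integral_congr_ae (Filter.Eventually.of_forall hint),
      integral_add (intgI (by fun_prop)) (intgI (by fun_prop)), mul_add]
    congr 1
    · rw [← integral_const_mul, ← integral_const_mul]
      exact integral_congr_ae (Filter.Eventually.of_forall fun v => by ring)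
    · rw [← integral_const_mul, ← integral_const_mul]
      exact integral_congr_ae (Filter.Eventually.of_forall fun v => by ring)
  -- continuity of lhat1 on [0, T]
  have hLcont : ContinuousOn lhat1 (Set.Icc 0 T) := by
    have : ContinuousOn (fun t => ρ t * (intOp k0) (ρ t)) (Set.Icc 0 T) :=
      hρc.mul ((intOp k0).continuous.comp_continuousOn hρc)
    exact this.congr fun t _ => hlh_eq t
  -- clamped version of lhat1, continuous on all of ℝ
  set Lc : ℝ → C(I01, ℝ) := IccExtend hT.le ((Set.Icc 0 T).restrict lhat1) with hLcdef
  have hLc : Continuous Lc :=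
    continuous_IccExtend_iff.2 (continuousOn_iff_continuous_restrict.1 hLcont)
  have hLc_eq : ∀ t ∈ Set.Icc (0:ℝ) T, Lc t = lhat1 t := fun t ht => by
    rw [hLcdef, IccExtend_of_mem hT.le _ ht]
    rfl
  -- existence of the solution
  obtain ⟨ϑ, hϑcont, hϑ0, hϑd⟩ := odeExist P9 Lc hLc φ
  have hsol : ∀ t ∈ Set.Icc (0:ℝ) T,
      HasDerivWithinAt ϑ (P9 (ϑ t) + lhat1 t) (Set.Icc 0 T) t := by
    intro t ht
    have := (hϑd t).hasDerivWithinAt (s := Set.Icc 0 T)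
    rwa [hLc_eq t ht] at this
  refine ⟨ϑ, ⟨hϑ0, hsol⟩, ?_, ?_, ?_⟩
  · rintro ϑ' ⟨h0', hd'⟩
    exact odeUniq P9 (fun t => lhat1 t) ϑ' ϑ hd' hsol (by rw [h0', hϑ0])
  · exact (ContinuousEval.continuous_eval.comp
      ((hϑcont.comp continuous_fst).prodMk continuous_snd)).continuousOn
  · -- the dual representation
    set η : ℝ → (C(I01, ℝ) →L[ℝ] ℝ) := fun t => Jmap (ϑ t) with hηdef
    -- main Fubini identity
    have hFub : ∀ g f : C(I01, ℝ),
        (∫ u : I01, (P9 g) u * f u) = ∫ u : I01, g u * (P2 f) u := by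
      intro g f
      have hcg := g.continuous
      have hcf := f.continuous
      have hcb := b.continuous
      have hcc := c.continuous
      have cI1 : Continuous fun u : I01 => ∫ v : I01, lam (u, v) * (a1 (u, v) ^ 2 - 1) :=
        contParam (k := fun p => lam p * (a1 p ^ 2 - 1)) (by fun_prop)
      have cI4 : Continuous fun u : I01 => ∫ v : I01, lam (v, u) * (a4 (v, u) ^ 2 - 1) :=
        contParam (k := fun p => lam (p.2, p.1) * (a4 (p.2, p.1) ^ 2 - 1)) (by fun_prop)
      have cI2g : Continuous fun u : I01 => ∫ v : I01, lam (u, v) * a2 (u, v) ^ 2 * g v :=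
        contParam (k := fun p => lam p * a2 p ^ 2 * g p.2) (by fun_prop)
      have cI3g : Continuous fun u : I01 => ∫ v : I01, lam (v, u) * a3 (v, u) ^ 2 * g v :=
        contParam (k := fun p => lam (p.2, p.1) * a3 (p.2, p.1) ^ 2 * g p.2) (by fun_prop)
      have cI2f : Continuous fun u : I01 => ∫ v : I01, lam (v, u) * a2 (v, u) ^ 2 * f v :=
        contParam (k := fun p => lam (p.2, p.1) * a2 (p.2, p.1) ^ 2 * f p.2) (by fun_prop)
      have cI3f : Continuous fun u : I01 => ∫ v : I01, lam (u, v) * a3 (u, v) ^ 2 * f v :=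
        contParam (k := fun p => lam p * a3 p ^ 2 * f p.2) (by fun_prop)
      have e1 : (fun u : I01 => (P9 g) u * f u) = fun u : I01 =>
          ((c u ^ 2 - 1) * b u * g u) * f u
          + (g u * (∫ v : I01, lam (u, v) * (a1 (u, v) ^ 2 - 1))) * f u
          + (∫ v : I01, lam (u, v) * a2 (u, v) ^ 2 * g v) * f u
          + (∫ v : I01, lam (v, u) * a3 (v, u) ^ 2 * g v) * f u
          + (g u * (∫ v : I01, lam (v, u) * (a4 (v, u) ^ 2 - 1))) * f u := by
        funext u; rw [hP9 g u]; ring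
      have e2 : (fun u : I01 => g u * (P2 f) u) = fun u : I01 =>
          g u * ((c u ^ 2 - 1) * b u * f u)
          + g u * (f u * (∫ v : I01, lam (u, v) * (a1 (u, v) ^ 2 - 1)))
          + g u * (∫ v : I01, lam (v, u) * a2 (v, u) ^ 2 * f v)
          + g u * (∫ v : I01, lam (u, v) * a3 (u, v) ^ 2 * f v)
          + g u * (f u * (∫ v : I01, lam (v, u) * (a4 (v, u) ^ 2 - 1))) := by
        funext u; rw [hP2 f u]; ring
      rw [e1, e2,
        int5 (by fun_prop) (by fun_prop) (by fun_prop) (by fun_prop) (by fun_prop),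
        int5 (by fun_prop) (by fun_prop) (by fun_prop) (by fun_prop) (by fun_prop)]
      have t1 : ∫ u : I01, ((c u ^ 2 - 1) * b u * g u) * f u
          = ∫ u : I01, g u * ((c u ^ 2 - 1) * b u * f u) :=
        integral_congr_ae (Filter.Eventually.of_forall fun u => by ring)
      have t2 : ∫ u : I01, (g u * (∫ v : I01, lam (u, v) * (a1 (u, v) ^ 2 - 1))) * f u
          = ∫ u : I01, g u * (f u * (∫ v : I01, lam (u, v) * (a1 (u, v) ^ 2 - 1))) :=
        integral_congr_ae (Filter.Eventually.of_forall fun u => by ring)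
      have t5 : ∫ u : I01, (g u * (∫ v : I01, lam (v, u) * (a4 (v, u) ^ 2 - 1))) * f u
          = ∫ u : I01, g u * (f u * (∫ v : I01, lam (v, u) * (a4 (v, u) ^ 2 - 1))) :=
        integral_congr_ae (Filter.Eventually.of_forall fun u => by ring)
      have t3 : ∫ u : I01, (∫ v : I01, lam (u, v) * a2 (u, v) ^ 2 * g v) * f u
          = ∫ u : I01, g u * ∫ v : I01, lam (v, u) * a2 (v, u) ^ 2 * f v :=
        pairSwap ⟨fun p => lam p * a2 p ^ 2, by fun_prop⟩ g f
      have t4 : ∫ u : I01, (∫ v : I01, lam (v, u) * a3 (v, u) ^ 2 * g v) * f u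
          = ∫ u : I01, g u * ∫ v : I01, lam (u, v) * a3 (u, v) ^ 2 * f v :=
        pairSwap' ⟨fun p => lam p * a3 p ^ 2, by fun_prop⟩ g f
      rw [t1, t2, t3, t4, t5]
    -- lhat1 pairs to l1
    have hl1eq : ∀ (t : ℝ) (f : C(I01, ℝ)),
        (∫ u : I01, lhat1 t u * f u) = l1 t f := by
      intro t f
      have hcf := f.continuous
      have hcρ := (ρ t).continuous
      have cIA : Continuous fun u : I01 =>
          ∫ v : I01, ρ t u * ρ t v * a1 (u, v) * a2 (u, v) * lam (u, v) :=
        contParam (k := fun p => ρ t p.1 * ρ t p.2 * a1 p * a2 p * lam p) (by fun_prop)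
      have cIB : Continuous fun u : I01 =>
          ∫ v : I01, lam (v, u) * a3 (v, u) * a4 (v, u) * ρ t u * ρ t v :=
        contParam (k := fun p => lam (p.2, p.1) * a3 (p.2, p.1) * a4 (p.2, p.1)
          * ρ t p.1 * ρ t p.2) (by fun_prop)
      rw [hl1 t f]
      have e : (fun u : I01 => lhat1 t u * f u) = fun u : I01 =>
          2 * ((∫ v : I01, ρ t u * ρ t v * a1 (u, v) * a2 (u, v) * lam (u, v)) * f u)
          + 2 * ((∫ v : I01, lam (v, u) * a3 (v, u) * a4 (v, u) * ρ t u * ρ t v) * f u) := by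
        funext u; rw [hlhat1 t u]; ring
      rw [e, integral_add (intgI (by fun_prop)) (intgI (by fun_prop)),
        integral_const_mul, integral_const_mul]
      congr 1
      · congr 1
        refine integral_congr_ae (Filter.Eventually.of_forall fun u => ?_)
        exact (integral_mul_const _ _).symm
      · congr 1
        refine integral_congr_ae (Filter.Eventually.of_forall fun u => ?_)
        exact (integral_mul_const _ _).symm
    -- key operator identity
    have keyJ : ∀ (t : ℝ) (gC : C(I01, ℝ)),
        Jmap (P9 gC + lhat1 t) = (Jmap gC).comp P2 + l1 t := by
      intro t gC
      ext f
      have h1 : Jmap (P9 gC + lhat1 t) f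
          = (∫ u : I01, (P9 gC) u * f u) + ∫ u : I01, lhat1 t u * f u := by
        rw [Jmap_apply]
        have : (fun u : I01 => (P9 gC + lhat1 t) u * f u)
            = fun u : I01 => (P9 gC) u * f u + lhat1 t u * f u := by
          funext u; simp [ContinuousMap.add_apply]; ring
        rw [this]
        exact integral_add (intgI (((P9 gC).continuous).mul f.continuous))
          (intgI (((lhat1 t).continuous).mul f.continuous))
      rw [ContinuousLinearMap.add_apply, ContinuousLinearMap.comp_apply, h1,
        hFub gC f, hl1eq t f, Jmap_apply]
    -- η solves the dual ODE
    have hηd : ∀ t ∈ Set.Icc (0:ℝ) T,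
        HasDerivWithinAt η (compOp P2 (η t) + l1 t) (Set.Icc 0 T) t := by
      intro t ht
      have hder := JmapDeriv (hsol t ht)
      rw [keyJ t (ϑ t), ← compOp_apply] at hder
      exact hder
    have hθd' : ∀ t ∈ Set.Icc (0:ℝ) T,
        HasDerivWithinAt θ (compOp P2 (θ t) + l1 t) (Set.Icc 0 T) t := by
      intro t ht
      have h := hθ t ht
      rwa [← compOp_apply] at h
    have hη0 : θ 0 = η 0 := by
      rw [hθinit, hηdef]
      ext f
      rw [hθ0 f]
      show _ = Jmap (ϑ 0) f
      rw [hϑ0, Jmap_apply]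
    have heq := odeUniq (compOp P2) l1 θ η hθd' hηd hη0
    intro t ht f
    rw [heq ht]
    show Jmap (ϑ t) f = _
    rw [Jmap_apply]
end
end

section
/- (Pair-symmetric exclusion specialization.) Suppose b ≡ 0, a₁ ≡ 0, a₄ ≡ 0, a₂ ≡ 1 and a₃ ≡ 1. Then l̂_{1,t} ≡ 0 and ϑ(t,·) = ρ(t,·) for all t ∈ [0,T]; moreover, for every f ∈ C[0,1] and s ∈ [0,T], [f,f]_s = ∫₀¹∫₀¹ λ(u,v)(ρ(s,u) + ρ(s,v) − 2ρ(s,u)ρ(s,v))(f(u) − f(v))² dudv. -/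
open MeasureTheory Set

noncomputable section

/-- The kernel `K₁(s,u)`. -/
noncomputable def K1 (b c : C(I01, ℝ)) (lam a1 a2 a3 a4 : C(I01 × I01, ℝ))
    (ρ ϑ : ℝ → C(I01, ℝ)) (s : ℝ) (u : I01) : ℝ :=
  ϑ s u * b u * (c u - 1) ^ 2
  + ϑ s u * (∫ v : I01, lam (u, v) * (a1 (u, v) - 1) ^ 2)
  + (∫ v : I01, ϑ s v * lam (u, v) * a2 (u, v) ^ 2)
  + (∫ v : I01, lam (v, u) * a3 (v, u) ^ 2 * ϑ s v)
  + ϑ s u * (∫ v : I01, lam (v, u) * (a4 (v, u) - 1) ^ 2)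
  + 2 * ρ s u * (∫ v : I01, lam (u, v) * (a1 (u, v) - 1) * a2 (u, v) * ρ s v)
  + 2 * ρ s u * (∫ v : I01, lam (v, u) * a3 (v, u) * (a4 (v, u) - 1) * ρ s v)

/-- The kernel `K₂(s,u,v)`. -/
noncomputable def K2 (lam a1 a2 a3 a4 : C(I01 × I01, ℝ))
    (ρ ϑ : ℝ → C(I01, ℝ)) (s : ℝ) (u v : I01) : ℝ :=
  2 * lam (u, v) * (a1 (u, v) - 1) * a3 (u, v) * ϑ s u
  + 2 * lam (u, v) * a2 (u, v) * (a4 (u, v) - 1) * ϑ s v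
  + 2 * lam (u, v) * (a1 (u, v) - 1) * (a4 (u, v) - 1) * ρ s u * ρ s v
  + 2 * lam (u, v) * a2 (u, v) * a3 (u, v) * ρ s u * ρ s v

/-- The quadratic form `[f,f]_s = ∫₀¹K₁(s,u)f²(u)du + ∫₀¹∫₀¹K₂(s,u,v)f(u)f(v)dudv`. -/
noncomputable def brk (b c : C(I01, ℝ)) (lam a1 a2 a3 a4 : C(I01 × I01, ℝ))
    (ρ ϑ : ℝ → C(I01, ℝ)) (s : ℝ) (f : C(I01, ℝ)) : ℝ :=
  (∫ u : I01, K1 b c lam a1 a2 a3 a4 ρ ϑ s u * f u ^ 2)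
  + ∫ u : I01, ∫ v : I01, K2 lam a1 a2 a3 a4 ρ ϑ s u v * f u * f v

/-- Any continuous real function on a compact measure space (with finite volume)
is integrable. -/
lemma cint {X : Type*} [MeasureSpace X] [TopologicalSpace X] [CompactSpace X]
    [OpensMeasurableSpace X] [IsFiniteMeasure (volume : Measure X)] {g : X → ℝ}
    (hg : Continuous g) : Integrable g volume :=
  hg.integrable_of_hasCompactSupport (HasCompactSupport.of_compactSpace g)

/-- pair-symmetric exclusion specialization: if `b ≡ 0`, `a₁ ≡ 0`,
`a₄ ≡ 0`, `a₂ ≡ 1`, `a₃ ≡ 1`, then `l̂_{1,t} ≡ 0`, `ϑ(t,·) = ρ(t,·)` on `[0,T]`, and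
`[f,f]_s = ∫₀¹∫₀¹ λ(u,v)(ρ(s,u)+ρ(s,v)−2ρ(s,u)ρ(s,v))(f(u)−f(v))² dudv`. -/
theorem stmt13
    (b c : C(I01, ℝ)) (lam a1 a2 a3 a4 : C(I01 × I01, ℝ))
    (hb : ∀ u, 0 ≤ b u) (hc : ∀ u, 0 ≤ c u)
    (hlam : ∀ p, 0 ≤ lam p) (ha1 : ∀ p, 0 ≤ a1 p) (ha2 : ∀ p, 0 ≤ a2 p)
    (ha3 : ∀ p, 0 ≤ a3 p) (ha4 : ∀ p, 0 ≤ a4 p)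
    (φ : C(I01, ℝ)) (T : ℝ) (hT : 0 < T)
    (P8 : C(I01, ℝ) →L[ℝ] C(I01, ℝ))
    (hP8 : ∀ (f : C(I01, ℝ)) (u : I01),
      P8 f u = b u * (c u - 1) * f u
        + f u * (∫ v : I01, lam (v, u) * (a4 (v, u) - 1))
        + f u * (∫ v : I01, lam (u, v) * (a1 (u, v) - 1))
        + (∫ v : I01, lam (u, v) * a2 (u, v) * f v)
        + (∫ v : I01, lam (v, u) * a3 (v, u) * f v))
    (ρ : ℝ → C(I01, ℝ)) (hρinit : ρ 0 = φ)
    (hρ : ∀ t ∈ Set.Ici (0 : ℝ), HasDerivWithinAt ρ (P8 (ρ t)) (Set.Ici 0) t)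
    (P9 : C(I01, ℝ) →L[ℝ] C(I01, ℝ))
    (hP9 : ∀ (f : C(I01, ℝ)) (u : I01),
      P9 f u = (c u ^ 2 - 1) * b u * f u
        + f u * (∫ v : I01, lam (u, v) * (a1 (u, v) ^ 2 - 1))
        + (∫ v : I01, lam (u, v) * a2 (u, v) ^ 2 * f v)
        + (∫ v : I01, lam (v, u) * a3 (v, u) ^ 2 * f v)
        + f u * (∫ v : I01, lam (v, u) * (a4 (v, u) ^ 2 - 1)))
    (lhat1 : ℝ → C(I01, ℝ))
    (hlhat1 : ∀ (t : ℝ) (u : I01),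
      lhat1 t u = 2 * (∫ v : I01, ρ t u * ρ t v * a1 (u, v) * a2 (u, v) * lam (u, v))
        + 2 * ∫ v : I01, lam (v, u) * a3 (v, u) * a4 (v, u) * ρ t u * ρ t v)
    (ϑ : ℝ → C(I01, ℝ)) (hϑinit : ϑ 0 = φ)
    (hϑ : ∀ t ∈ Set.Icc (0 : ℝ) T,
      HasDerivWithinAt ϑ (P9 (ϑ t) + lhat1 t) (Set.Icc 0 T) t)
    (hbz : ∀ u : I01, b u = 0)
    (ha1z : ∀ p : I01 × I01, a1 p = 0)
    (ha4z : ∀ p : I01 × I01, a4 p = 0)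
    (ha2o : ∀ p : I01 × I01, a2 p = 1)
    (ha3o : ∀ p : I01 × I01, a3 p = 1) :
    (∀ (t : ℝ) (u : I01), lhat1 t u = 0) ∧
    (∀ t ∈ Set.Icc (0 : ℝ) T, ϑ t = ρ t) ∧
    ∀ s ∈ Set.Icc (0 : ℝ) T, ∀ f : C(I01, ℝ),
      brk b c lam a1 a2 a3 a4 ρ ϑ s f
        = ∫ u : I01, ∫ v : I01,
            lam (u, v) * (ρ s u + ρ s v - 2 * ρ s u * ρ s v) * (f u - f v) ^ 2 := by
  -- Part 1 : lhat1 vanishes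
  have h1 : ∀ (t : ℝ) (u : I01), lhat1 t u = 0 := by
    intro t u
    rw [hlhat1]
    simp [ha1z, ha4z]
  have hl0 : ∀ t : ℝ, lhat1 t = 0 :=
    fun t => ContinuousMap.ext fun u => (h1 t u).trans (ContinuousMap.zero_apply u).symm
  -- P9 = P8 under the specialization
  have hPP : ∀ g : C(I01, ℝ), P9 g = P8 g := by
    intro g
    ext u
    rw [hP9, hP8]
    have j1 : (∫ v : I01, lam (u, v) * (a1 (u, v) ^ 2 - 1)) = -∫ v : I01, lam (u, v) := by
      rw [← integral_neg]
      exact integral_congr_ae (.of_forall fun v => by beta_reduce; rw [ha1z]; ring)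
    have j2 : (∫ v : I01, lam (u, v) * a2 (u, v) ^ 2 * g v) = ∫ v : I01, lam (u, v) * g v :=
      integral_congr_ae (.of_forall fun v => by beta_reduce; rw [ha2o]; ring)
    have j3 : (∫ v : I01, lam (v, u) * a3 (v, u) ^ 2 * g v) = ∫ v : I01, lam (v, u) * g v :=
      integral_congr_ae (.of_forall fun v => by beta_reduce; rw [ha3o]; ring)
    have j4 : (∫ v : I01, lam (v, u) * (a4 (v, u) ^ 2 - 1)) = -∫ v : I01, lam (v, u) := by
      rw [← integral_neg]
      exact integral_congr_ae (.of_forall fun v => by beta_reduce; rw [ha4z]; ring)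
    have j5 : (∫ v : I01, lam (v, u) * (a4 (v, u) - 1)) = -∫ v : I01, lam (v, u) := by
      rw [← integral_neg]
      exact integral_congr_ae (.of_forall fun v => by beta_reduce; rw [ha4z]; ring)
    have j6 : (∫ v : I01, lam (u, v) * (a1 (u, v) - 1)) = -∫ v : I01, lam (u, v) := by
      rw [← integral_neg]
      exact integral_congr_ae (.of_forall fun v => by beta_reduce; rw [ha1z]; ring)
    have j7 : (∫ v : I01, lam (u, v) * a2 (u, v) * g v) = ∫ v : I01, lam (u, v) * g v :=
      integral_congr_ae (.of_forall fun v => by beta_reduce; rw [ha2o]; ring)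
    have j8 : (∫ v : I01, lam (v, u) * a3 (v, u) * g v) = ∫ v : I01, lam (v, u) * g v :=
      integral_congr_ae (.of_forall fun v => by beta_reduce; rw [ha3o]; ring)
    rw [j1, j2, j3, j4, j5, j6, j7, j8, hbz]
    ring
  -- Part 2 : ϑ = ρ on [0,T]
  have hϑρ : ∀ t ∈ Set.Icc (0 : ℝ) T, ϑ t = ρ t := by
    have hcontϑ : ContinuousOn ϑ (Set.Icc 0 T) := fun t ht => (hϑ t ht).continuousWithinAt
    have hcontρ : ContinuousOn ρ (Set.Icc 0 T) := fun t ht =>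
      ((hρ t ht.1).continuousWithinAt).mono Icc_subset_Ici_self
    exact ODE_solution_unique_of_mem_Icc_right
      (v := fun _ x => P8 x) (K := ‖P8‖₊) (s := fun _ => Set.univ)
      (fun _ _ => P8.lipschitz.lipschitzOnWith)
      hcontϑ
      (fun τ hτ => by
        have h := (hϑ τ (Ico_subset_Icc_self hτ)).mono_of_mem_nhdsWithin
          (Icc_mem_nhdsGE_of_mem hτ)
        rwa [hl0 τ, add_zero, hPP] at h)
      (fun _ _ => mem_univ _)
      hcontρ
      (fun τ hτ => (hρ τ hτ.1).mono (Ici_subset_Ici.2 hτ.1))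
      (fun _ _ => mem_univ _)
      (by rw [hϑinit, hρinit])
  refine ⟨h1, hϑρ, ?_⟩
  -- Part 3 : computation of the quadratic form
  intro s hs f
  have hr : ϑ s = ρ s := hϑρ s hs
  -- pointwise reduction of the K1-integrand
  have h2 : ∀ u : I01, K1 b c lam a1 a2 a3 a4 ρ ϑ s u * f u ^ 2
      = ∫ v : I01, (lam (u, v) + lam (v, u))
          * (ρ s u + ρ s v - 2 * ρ s u * ρ s v) * f u ^ 2 := by
    intro u
    have i1 : Integrable (fun v : I01 => lam (u, v)) volume := cint (by fun_prop)
    have i2 : Integrable (fun v : I01 => lam (v, u)) volume := cint (by fun_prop)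
    have i3 : Integrable (fun v : I01 => lam (u, v) * ρ s v) volume := cint (by fun_prop)
    have i4 : Integrable (fun v : I01 => lam (v, u) * ρ s v) volume := cint (by fun_prop)
    have j1 : (∫ v : I01, lam (u, v) * (a1 (u, v) - 1) ^ 2) = ∫ v : I01, lam (u, v) :=
      integral_congr_ae (.of_forall fun v => by beta_reduce; rw [ha1z]; ring)
    have j2 : (∫ v : I01, ϑ s v * lam (u, v) * a2 (u, v) ^ 2)
        = ∫ v : I01, lam (u, v) * ρ s v :=
      integral_congr_ae (.of_forall fun v => by beta_reduce; rw [ha2o, hr]; ring)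
    have j3 : (∫ v : I01, lam (v, u) * a3 (v, u) ^ 2 * ϑ s v)
        = ∫ v : I01, lam (v, u) * ρ s v :=
      integral_congr_ae (.of_forall fun v => by beta_reduce; rw [ha3o, hr]; ring)
    have j4 : (∫ v : I01, lam (v, u) * (a4 (v, u) - 1) ^ 2) = ∫ v : I01, lam (v, u) :=
      integral_congr_ae (.of_forall fun v => by beta_reduce; rw [ha4z]; ring)
    have j5 : (∫ v : I01, lam (u, v) * (a1 (u, v) - 1) * a2 (u, v) * ρ s v)
        = -∫ v : I01, lam (u, v) * ρ s v := by
      rw [← integral_neg]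
      exact integral_congr_ae (.of_forall fun v => by beta_reduce; rw [ha1z, ha2o]; ring)
    have j6 : (∫ v : I01, lam (v, u) * a3 (v, u) * (a4 (v, u) - 1) * ρ s v)
        = -∫ v : I01, lam (v, u) * ρ s v := by
      rw [← integral_neg]
      exact integral_congr_ae (.of_forall fun v => by beta_reduce; rw [ha3o, ha4z]; ring)
    have lin : (∫ v : I01, ((ρ s u * f u ^ 2) * lam (u, v)
          + ((1 - 2 * ρ s u) * f u ^ 2) * (lam (u, v) * ρ s v)
          + ((ρ s u * f u ^ 2) * lam (v, u)
          + ((1 - 2 * ρ s u) * f u ^ 2) * (lam (v, u) * ρ s v))))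
        = (ρ s u * f u ^ 2) * (∫ v : I01, lam (u, v))
          + ((1 - 2 * ρ s u) * f u ^ 2) * (∫ v : I01, lam (u, v) * ρ s v)
          + ((ρ s u * f u ^ 2) * (∫ v : I01, lam (v, u))
          + ((1 - 2 * ρ s u) * f u ^ 2) * (∫ v : I01, lam (v, u) * ρ s v)) := by
      have k1 : Integrable (fun v : I01 => (ρ s u * f u ^ 2) * lam (u, v)) volume :=
        i1.const_mul _
      have k3 : Integrable (fun v : I01 =>
          ((1 - 2 * ρ s u) * f u ^ 2) * (lam (u, v) * ρ s v)) volume := i3.const_mul _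
      have k2 : Integrable (fun v : I01 => (ρ s u * f u ^ 2) * lam (v, u)) volume :=
        i2.const_mul _
      have k4 : Integrable (fun v : I01 =>
          ((1 - 2 * ρ s u) * f u ^ 2) * (lam (v, u) * ρ s v)) volume := i4.const_mul _
      have k13 : Integrable (fun v : I01 => (ρ s u * f u ^ 2) * lam (u, v)
          + ((1 - 2 * ρ s u) * f u ^ 2) * (lam (u, v) * ρ s v)) volume := k1.add k3
      have k24 : Integrable (fun v : I01 => (ρ s u * f u ^ 2) * lam (v, u)
          + ((1 - 2 * ρ s u) * f u ^ 2) * (lam (v, u) * ρ s v)) volume := k2.add k4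
      rw [integral_add k13 k24, integral_add k1 k3, integral_add k2 k4,
          integral_const_mul, integral_const_mul, integral_const_mul, integral_const_mul]
    have hrhs : (∫ v : I01, (lam (u, v) + lam (v, u))
          * (ρ s u + ρ s v - 2 * ρ s u * ρ s v) * f u ^ 2)
        = (ρ s u * f u ^ 2) * (∫ v : I01, lam (u, v))
          + ((1 - 2 * ρ s u) * f u ^ 2) * (∫ v : I01, lam (u, v) * ρ s v)
          + ((ρ s u * f u ^ 2) * (∫ v : I01, lam (v, u))
          + ((1 - 2 * ρ s u) * f u ^ 2) * (∫ v : I01, lam (v, u) * ρ s v)) := by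
      rw [← lin]
      exact integral_congr_ae (.of_forall fun v => by beta_reduce; ring)
    simp only [K1]
    rw [j1, j2, j3, j4, j5, j6, hbz, hr, hrhs]
    ring
  -- pointwise reduction of the K2-integrand
  have h3 : ∀ u : I01, (∫ v : I01, K2 lam a1 a2 a3 a4 ρ ϑ s u v * f u * f v)
      = ∫ v : I01, -2 * lam (u, v)
          * (ρ s u + ρ s v - 2 * ρ s u * ρ s v) * (f u * f v) := by
    intro u
    exact integral_congr_ae (.of_forall fun v => by
      beta_reduce
      simp only [K2]
      rw [ha1z, ha2o, ha3o, ha4z, hr]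
      ring)
  have t1 : (∫ u : I01, K1 b c lam a1 a2 a3 a4 ρ ϑ s u * f u ^ 2)
      = ∫ u : I01, ∫ v : I01, (lam (u, v) + lam (v, u))
          * (ρ s u + ρ s v - 2 * ρ s u * ρ s v) * f u ^ 2 :=
    integral_congr_ae (.of_forall h2)
  have t2 : (∫ u : I01, ∫ v : I01, K2 lam a1 a2 a3 a4 ρ ϑ s u v * f u * f v)
      = ∫ u : I01, ∫ v : I01, -2 * lam (u, v)
          * (ρ s u + ρ s v - 2 * ρ s u * ρ s v) * (f u * f v) :=
    integral_congr_ae (.of_forall h3)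
  -- integrability of the various kernels on the product space
  have iW1 : Integrable (fun p : I01 × I01 => (lam p + lam (p.2, p.1))
      * (ρ s p.1 + ρ s p.2 - 2 * ρ s p.1 * ρ s p.2) * f p.1 ^ 2)
      ((volume : Measure I01).prod volume) := by
    rw [← Measure.volume_eq_prod]; exact cint (by fun_prop)
  have iW2 : Integrable (fun p : I01 × I01 => -2 * lam p
      * (ρ s p.1 + ρ s p.2 - 2 * ρ s p.1 * ρ s p.2) * (f p.1 * f p.2))
      ((volume : Measure I01).prod volume) := by
    rw [← Measure.volume_eq_prod]; exact cint (by fun_prop)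
  have iA : Integrable (fun p : I01 × I01 => lam p
      * (ρ s p.1 + ρ s p.2 - 2 * ρ s p.1 * ρ s p.2) * (f p.1 - f p.2) ^ 2)
      ((volume : Measure I01).prod volume) := by
    rw [← Measure.volume_eq_prod]; exact cint (by fun_prop)
  have iB : Integrable (fun p : I01 × I01 => lam (p.2, p.1)
      * (ρ s p.1 + ρ s p.2 - 2 * ρ s p.1 * ρ s p.2) * f p.1 ^ 2)
      ((volume : Measure I01).prod volume) := by
    rw [← Measure.volume_eq_prod]; exact cint (by fun_prop)
  have iC : Integrable (fun p : I01 × I01 => lam p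
      * (ρ s p.1 + ρ s p.2 - 2 * ρ s p.1 * ρ s p.2) * f p.2 ^ 2)
      ((volume : Measure I01).prod volume) := by
    rw [← Measure.volume_eq_prod]; exact cint (by fun_prop)
  -- C-integral equals B-integral by swapping coordinates
  have t8 : (∫ p : I01 × I01, lam p
        * (ρ s p.1 + ρ s p.2 - 2 * ρ s p.1 * ρ s p.2) * f p.2 ^ 2
        ∂((volume : Measure I01).prod volume))
      = ∫ p : I01 × I01, lam (p.2, p.1)
        * (ρ s p.1 + ρ s p.2 - 2 * ρ s p.1 * ρ s p.2) * f p.1 ^ 2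
        ∂((volume : Measure I01).prod volume) := by
    have hswap := integral_prod_swap (μ := (volume : Measure I01)) (ν := (volume : Measure I01))
      (f := fun p : I01 × I01 => lam (p.2, p.1)
        * (ρ s p.1 + ρ s p.2 - 2 * ρ s p.1 * ρ s p.2) * f p.1 ^ 2)
    refine Eq.trans ?_ hswap
    refine integral_congr_ae (.of_forall fun p => ?_)
    obtain ⟨u, v⟩ := p
    simp only [Prod.swap_prod_mk]
    ring
  simp only [brk]
  rw [t1, t2]
  calc (∫ u : I01, ∫ v : I01, (lam (u, v) + lam (v, u))
          * (ρ s u + ρ s v - 2 * ρ s u * ρ s v) * f u ^ 2)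
        + ∫ u : I01, ∫ v : I01, -2 * lam (u, v)
          * (ρ s u + ρ s v - 2 * ρ s u * ρ s v) * (f u * f v)
      = (∫ p : I01 × I01, (lam p + lam (p.2, p.1))
          * (ρ s p.1 + ρ s p.2 - 2 * ρ s p.1 * ρ s p.2) * f p.1 ^ 2
          ∂((volume : Measure I01).prod volume))
        + ∫ p : I01 × I01, -2 * lam p
          * (ρ s p.1 + ρ s p.2 - 2 * ρ s p.1 * ρ s p.2) * (f p.1 * f p.2)
          ∂((volume : Measure I01).prod volume) := by
        rw [integral_integral iW1, integral_integral iW2]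
    _ = ∫ p : I01 × I01, ((lam p + lam (p.2, p.1))
          * (ρ s p.1 + ρ s p.2 - 2 * ρ s p.1 * ρ s p.2) * f p.1 ^ 2
          + -2 * lam p
          * (ρ s p.1 + ρ s p.2 - 2 * ρ s p.1 * ρ s p.2) * (f p.1 * f p.2))
          ∂((volume : Measure I01).prod volume) := (integral_add iW1 iW2).symm
    _ = ∫ p : I01 × I01, (lam p
          * (ρ s p.1 + ρ s p.2 - 2 * ρ s p.1 * ρ s p.2) * (f p.1 - f p.2) ^ 2
          + (lam (p.2, p.1)
          * (ρ s p.1 + ρ s p.2 - 2 * ρ s p.1 * ρ s p.2) * f p.1 ^ 2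
          - lam p
          * (ρ s p.1 + ρ s p.2 - 2 * ρ s p.1 * ρ s p.2) * f p.2 ^ 2))
          ∂((volume : Measure I01).prod volume) :=
        integral_congr_ae (.of_forall fun p => by beta_reduce; ring)
    _ = (∫ p : I01 × I01, lam p
          * (ρ s p.1 + ρ s p.2 - 2 * ρ s p.1 * ρ s p.2) * (f p.1 - f p.2) ^ 2
          ∂((volume : Measure I01).prod volume))
        + ((∫ p : I01 × I01, lam (p.2, p.1)
          * (ρ s p.1 + ρ s p.2 - 2 * ρ s p.1 * ρ s p.2) * f p.1 ^ 2
          ∂((volume : Measure I01).prod volume))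
        - ∫ p : I01 × I01, lam p
          * (ρ s p.1 + ρ s p.2 - 2 * ρ s p.1 * ρ s p.2) * f p.2 ^ 2
          ∂((volume : Measure I01).prod volume)) := by
        have hBC : Integrable (fun p : I01 × I01 =>
            lam (p.2, p.1) * (ρ s p.1 + ρ s p.2 - 2 * ρ s p.1 * ρ s p.2) * f p.1 ^ 2
            - lam p * (ρ s p.1 + ρ s p.2 - 2 * ρ s p.1 * ρ s p.2) * f p.2 ^ 2)
            ((volume : Measure I01).prod volume) := iB.sub iC
        rw [integral_add iA hBC, integral_sub iB iC]
    _ = ∫ p : I01 × I01, lam p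
          * (ρ s p.1 + ρ s p.2 - 2 * ρ s p.1 * ρ s p.2) * (f p.1 - f p.2) ^ 2
          ∂((volume : Measure I01).prod volume) := by
        rw [t8]; ring
    _ = ∫ u : I01, ∫ v : I01,
          lam (u, v) * (ρ s u + ρ s v - 2 * ρ s u * ρ s v) * (f u - f v) ^ 2 :=
        (integral_integral (f := fun u v : I01 =>
          lam (u, v) * (ρ s u + ρ s v - 2 * ρ s u * ρ s v) * (f u - f v) ^ 2) iA).symm

end
end
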